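/- Let G_k = (N_k, T, P_k, S) be a context-free grammar in Dyck normal form with N_k = {S, [_1, ..., [_k, ]_1, ..., ]_k}, and suppose P_k contains no rule of the form S → t with t ∈ T ∪ {λ}. Then there exists a regular language R over {[_1, ..., [_k, ]_1, ..., ]_k} such that D_k ∩ R = 𝓛(G_k), where 𝓛(G_k) is the trace-language of G_k; consequently L(G_k) = φ(D_k ∩ R), where φ is the homomorphism mapping each bracket rewritten by a rule to two nonterminals to λ and each bracket N rewritten by a rule N → t to t. -/

import Mathlib

namespace CS

/-! ### Brackets and Dyck languages -/

/-- A bracket over `k` letters: `(i, true)` is the left bracket `[ᵢ` and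
`(i, false)` is the right bracket `]ᵢ`. -/
abbrev Bracket (k : ℕ) : Type := Fin k × Bool

/-- The one-sided Dyck language `D_k` over `k` letters, i.e. the language generated by the
context-free grammar with rules `S → [ᵢ S ]ᵢ`, `S → SS`, `S → [ᵢ ]ᵢ` for `1 ≤ i ≤ k`. -/
inductive IsDyck {k : ℕ} : List (Bracket k) → Prop
  | pair (i : Fin k) : IsDyck [(i, true), (i, false)]
  | wrap (i : Fin k) {w : List (Bracket k)} (hw : IsDyck w) :
      IsDyck ((i, true) :: w ++ [(i, false)])
  | concat {u v : List (Bracket k)} (hu : IsDyck u) (hv : IsDyck v) : IsDyck (u ++ v)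

/-- The number of left (open) brackets in `w`. -/
def opens {k : ℕ} (w : List (Bracket k)) : ℕ := (w.filter fun b => b.2).length

/-- The number of right (close) brackets in `w`. -/
def closes {k : ℕ} (w : List (Bracket k)) : ℕ := (w.filter fun b => !b.2).length

/-- A string is balanced if it has as many left brackets as right brackets and every prefix
has at least as many left brackets as right brackets.  (This is the balancedness of the image
of the string under the homomorphism `h` sending every `[ᵢ` to `[₁` and every `]ᵢ` to `]₁`.) -/
def IsBalanced {k : ℕ} (w : List (Bracket k)) : Prop :=
  opens w = closes w ∧ ∀ p : List (Bracket k), p <+: w → closes p ≤ opens p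

/-- The substring `w_{i:j}` of `w` starting at the `i`-th position and ending at the `j`-th
position (1-indexed, inclusive). -/
def substr {α : Type*} (w : List α) (i j : ℕ) : List α := (w.drop (i - 1)).take (j - i + 1)

/-- `(i, j)` is a matched pair of `w` if `1 ≤ i ≤ j ≤ |w|` and `h(w_{i:j})` is balanced. -/
def MatchedPair {k : ℕ} (w : List (Bracket k)) (i j : ℕ) : Prop :=
  1 ≤ i ∧ i ≤ j ∧ j ≤ w.length ∧ IsBalanced (substr w i j)

/-- `(i, j)` is a nested pair of `w` if it is a matched pair and either `j = i + 1` or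
`(i + 1, j - 1)` is a matched pair. -/
def NestedPair {k : ℕ} (w : List (Bracket k)) (i j : ℕ) : Prop :=
  MatchedPair w i j ∧ (j = i + 1 ∨ MatchedPair w (i + 1) (j - 1))

/-- The homomorphism `h_{k'}` keeping only the brackets indexed by `k'` (sent to `[₁`/`]₁`)
and erasing all other brackets. -/
def projIdx {k : ℕ} (i : Fin k) (w : List (Bracket k)) : List (Bracket 1) :=
  (w.filter fun b => decide (b.1 = i)).map fun b => ((0 : Fin 1), b.2)

/-! ### Grammars: Chomsky and Dyck normal forms -/

variable {T : Type}

/-- Chomsky normal form: every rule has the form `A → BC` or `A → a`, except possibly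
`S → λ`, and the initial nonterminal never occurs on the right-hand side of a rule. -/
def IsChomskyNF (g : ContextFreeGrammar T) : Prop :=
  (∀ r ∈ g.rules,
      (∃ B C : g.NT, r.output = [Symbol.nonterminal B, Symbol.nonterminal C]) ∨
      (∃ a : T, r.output = [Symbol.terminal a]) ∨
      (r.input = g.initial ∧ r.output = [])) ∧
  (∀ r ∈ g.rules, Symbol.nonterminal g.initial ∉ r.output)

/-- Dyck normal form (Definition 1.1):
(1) Chomsky normal form;
(2) if `A → a` with `A ≠ S` then no other rule rewrites `A`;
(3) if some rule `X → AB` is in `P` then no rule of the form `X' → B'A` is in `P`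
    (equivalently, no nonterminal occurs both as a left member and as a right member of
    right-hand sides of two-nonterminal rules);
(4) for rules `X → AB` and `X' → A'B` one has `A = A'`, and for rules `X → AB` and
    `X' → AB'` one has `B = B'`. -/
def IsDyckNF (g : ContextFreeGrammar T) : Prop :=
  IsChomskyNF g ∧
  (∀ r ∈ g.rules, ∀ a : T, r.output = [Symbol.terminal a] → r.input ≠ g.initial →
      ∀ r' ∈ g.rules, r'.input = r.input → r' = r) ∧
  (∀ r ∈ g.rules, ∀ r' ∈ g.rules, ∀ A B B' : g.NT,
      r.output = [Symbol.nonterminal A, Symbol.nonterminal B] →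
      r'.output ≠ [Symbol.nonterminal B', Symbol.nonterminal A]) ∧
  (∀ r ∈ g.rules, ∀ r' ∈ g.rules, ∀ A A' B B' : g.NT,
      r.output = [Symbol.nonterminal A, Symbol.nonterminal B] →
      r'.output = [Symbol.nonterminal A', Symbol.nonterminal B'] →
      (B = B' → A = A') ∧ (A = A' → B = B'))

/-- Extension of a map on nonterminals to a map on symbols, acting as the identity on
terminal symbols. -/
def mapSym {N N' : Type*} (f : N → N') : Symbol T N → Symbol T N'
  | .terminal t => .terminal t
  | .nonterminal A => .nonterminal (f A)

/-- One leftmost derivation step rewriting the (leftmost) nonterminal `A`: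
everything to the left of the rewritten occurrence of `A` is terminal. -/
def LeftmostStep (g : ContextFreeGrammar T) (u v : List (Symbol T g.NT)) (A : g.NT) : Prop :=
  ∃ r ∈ g.rules, r.input = A ∧ ∃ (p : List T) (s : List (Symbol T g.NT)),
    u = p.map Symbol.terminal ++ Symbol.nonterminal A :: s ∧
    v = p.map Symbol.terminal ++ r.output ++ s

/-- One leftmost derivation step. -/
def LeftmostProduces (g : ContextFreeGrammar T) (u v : List (Symbol T g.NT)) : Prop :=
  ∃ A : g.NT, LeftmostStep g u v A

/-- `LmTrace g u v l` : there is a leftmost derivation in `g` from `u` to `v` whose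
consecutively rewritten nonterminals are listed (in order) in `l`. -/
inductive LmTrace (g : ContextFreeGrammar T) :
    List (Symbol T g.NT) → List (Symbol T g.NT) → List g.NT → Prop
  | refl (u : List (Symbol T g.NT)) : LmTrace g u u []
  | tail {u v w : List (Symbol T g.NT)} {l : List g.NT} {A : g.NT}
      (huv : LmTrace g u v l) (hvw : LeftmostStep g v w A) : LmTrace g u w (l ++ [A])

/-- `t` is the trace-word of the terminal word `w` associated with some leftmost derivation of
`w` in `g`: the concatenation of the nonterminals consecutively rewritten in the derivation,
excluding the axiom (which is the first rewritten nonterminal).  Trace-words are only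
associated with derivations `S ⇒ u₁ ⇒ ⋯ ⇒ u_{2n-1} = w` with `n ≥ 2`, i.e. `t ≠ []`. -/
def IsTraceWord (g : ContextFreeGrammar T) (w : List T) (t : List g.NT) : Prop :=
  t ≠ [] ∧ LmTrace g [Symbol.nonterminal g.initial] (w.map Symbol.terminal) (g.initial :: t)

/-- `A` is rewritten by a terminal rule `A → t` (i.e. `φ(A) ∈ T`). -/
def RewritesToTerminal (g : ContextFreeGrammar T) (A : g.NT) : Prop :=
  ∃ r ∈ g.rules, r.input = A ∧ ∃ t : T, r.output = [Symbol.terminal t]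

/-- The rule `A → a` belongs to the grammar. -/
def TerminalRule (g : ContextFreeGrammar T) (A : g.NT) (a : T) : Prop :=
  ∃ r ∈ g.rules, r.input = A ∧ r.output = [Symbol.terminal a]

/-- Linear grammar: all rules are of the forms `X → λ`, `X → t`, `X → tY`, `X → Yt`,
`X → t₁Yt₂`. -/
def IsLinear (g : ContextFreeGrammar T) : Prop :=
  ∀ r ∈ g.rules,
    r.output = [] ∨
    (∃ t : T, r.output = [Symbol.terminal t]) ∨
    (∃ (t : T) (Y : g.NT), r.output = [Symbol.terminal t, Symbol.nonterminal Y]) ∨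
    (∃ (t : T) (Y : g.NT), r.output = [Symbol.nonterminal Y, Symbol.terminal t]) ∨
    (∃ (t₁ t₂ : T) (Y : g.NT),
      r.output = [Symbol.terminal t₁, Symbol.nonterminal Y, Symbol.terminal t₂])

/-- Linear-Dyck normal form: Dyck normal form with `N⁽³⁾ = ∅`, i.e. in every
two-nonterminal rule `X → AB` at least one of `A`, `B` is rewritten by a terminal rule. -/
def IsLinearDyckNF (g : ContextFreeGrammar T) : Prop :=
  IsDyckNF g ∧
  ∀ r ∈ g.rules, ∀ A B : g.NT,
    r.output = [Symbol.nonterminal A, Symbol.nonterminal B] →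
    (RewritesToTerminal g A ∨ RewritesToTerminal g B)

/-- `(A, B)` is a pairwise pair of brackets in `N⁽¹⁾`: it occurs as the right-hand side of a
two-nonterminal rule and both members are rewritten by terminal rules. -/
def IsN1Pair (g : ContextFreeGrammar T) (A B : g.NT) : Prop :=
  (∃ r ∈ g.rules, r.output = [Symbol.nonterminal A, Symbol.nonterminal B]) ∧
  RewritesToTerminal g A ∧ RewritesToTerminal g B

/-- `C` is a bracket of some pair in `N⁽¹⁾`. -/
def IsN1Bracket (g : ContextFreeGrammar T) (C : g.NT) : Prop :=
  ∃ A B : g.NT, IsN1Pair g A B ∧ (C = A ∨ C = B)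

/-- The grammar over terminals `T` whose nonterminals are the axiom `S` (`none`) together
with the `2k` brackets `[₁, …, [ₖ, ]₁, …, ]ₖ`, with the given rules. -/
abbrev bracketGrammar (k : ℕ) (rs : Finset (ContextFreeRule T (Option (Bracket k)))) :
    ContextFreeGrammar T :=
  ⟨Option (Bracket k), none, rs⟩

/-! ### Auxiliary development for Statement 14 -/

section Aux

variable {k : ℕ}

/-- Output of the pairwise two-nonterminal rule for index `i`. -/
def pairOut (k : ℕ) (i : Fin k) : List (Symbol T (Option (Bracket k))) :=
  [Symbol.nonterminal (some (i, true)), Symbol.nonterminal (some (i, false))]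

variable (rs : Finset (ContextFreeRule T (Option (Bracket k))))

/-- There is a rule `X → [ᵢ ]ᵢ`. -/
def PRule (X : Option (Bracket k)) (i : Fin k) : Prop :=
  ∃ r ∈ rs, r.input = X ∧ r.output = pairOut k i

/-- `b` is rewritten by some terminal rule. -/
def TRule (b : Bracket k) : Prop :=
  ∃ r ∈ rs, r.input = some b ∧ ∃ a : T, r.output = [Symbol.terminal a]

/-- Allowed adjacency of brackets in a trace-word. -/
def adjB (b c : Bracket k) : Prop :=
  if c.2 then PRule rs (some b) c.1 else TRule rs b

/-- The local (regular) conditions cutting trace-words out of the Dyck language. -/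
def Good (d : List (Bracket k)) : Prop :=
  (∃ c : Bracket k, d.head? = some c ∧ c.2 = true ∧ PRule rs none c.1) ∧
  List.Chain' (adjB rs) d ∧
  (∃ c : Bracket k, d.getLast? = some c ∧ TRule rs c)

/-- `Gen rs X d w` : starting from the nonterminal `X` there is a (leftmost) derivation of the
terminal word `w` whose trace (not counting `X` itself) is `d`. -/
inductive Gen : Option (Bracket k) → List (Bracket k) → List T → Prop
  | term {X : Option (Bracket k)} {a : T}
      (h : ∃ r ∈ rs, r.input = X ∧ r.output = [Symbol.terminal a]) : Gen X [] [a]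
  | pair {X : Option (Bracket k)} {i : Fin k} {d₁ d₂ : List (Bracket k)} {w₁ w₂ : List T}
      (h : PRule rs X i)
      (h₁ : Gen (some (i, true)) d₁ w₁) (h₂ : Gen (some (i, false)) d₂ w₂) :
      Gen X ((i, true) :: d₁ ++ (i, false) :: d₂) (w₁ ++ w₂)

variable {rs}

lemma Gen.nil_inv {X : Option (Bracket k)} {w : List T} (h : Gen rs X [] w) :
    ∃ a : T, w = [a] ∧ ∃ r ∈ rs, r.input = X ∧ r.output = [Symbol.terminal a] := by
  cases h with
  | term h => exact ⟨_, rfl, h⟩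

lemma Gen.nil_tRule {b : Bracket k} {w : List T} (h : Gen rs (some b) [] w) : TRule rs b := by
  obtain ⟨a, -, r, hr, hri, hro⟩ := h.nil_inv
  exact ⟨r, hr, hri, a, hro⟩

lemma Gen.isDyck {X : Option (Bracket k)} {d : List (Bracket k)} {w : List T}
    (h : Gen rs X d w) (hd : d ≠ []) : IsDyck d := by
  induction h with
  | term h => exact absurd rfl hd
  | pair h h₁ h₂ ih₁ ih₂ =>
    rename_i X i d₁ d₂ w₁ w₂
    rcases eq_or_ne d₁ [] with rfl | hd₁ <;> rcases eq_or_ne d₂ [] with rfl | hd₂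
    · exact IsDyck.pair i
    · have := IsDyck.concat (IsDyck.pair i) (ih₂ hd₂)
      simpa using this
    · exact IsDyck.wrap i (ih₁ hd₁)
    · have : (i, true) :: d₁ ++ (i, false) :: d₂ =
          ((i, true) :: d₁ ++ [(i, false)]) ++ d₂ := by simp
      rw [this]
      exact IsDyck.concat (IsDyck.wrap i (ih₁ hd₁)) (ih₂ hd₂)

lemma Gen.props {X : Option (Bracket k)} {d : List (Bracket k)} {w : List T}
    (h : Gen rs X d w) :
    List.Chain' (adjB rs) d ∧ (∀ c ∈ d.head?, c.2 = true ∧ PRule rs X c.1) ∧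
      (∀ c ∈ d.getLast?, TRule rs c) := by
  induction h with
  | term h => simp; exact List.isChain_nil
  | pair h h₁ h₂ ih₁ ih₂ =>
    rename_i X i d₁ d₂ w₁ w₂
    obtain ⟨ch₁, hd₁, lt₁⟩ := ih₁
    obtain ⟨ch₂, hd₂, lt₂⟩ := ih₂
    refine ⟨?_, ?_, ?_⟩
    · have hsplit : (i, true) :: d₁ ++ (i, false) :: d₂ =
          ((i, true) :: d₁) ++ ((i, false) :: d₂) := by simp
      rw [hsplit, List.Chain', List.isChain_append]
      refine ⟨?_, ?_, ?_⟩
      · rw [List.isChain_cons]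
        refine ⟨fun y hy => ?_, ch₁⟩
        obtain ⟨hy2, hyP⟩ := hd₁ y hy
        unfold adjB
        rw [hy2]
        simpa using hyP
      · rw [List.isChain_cons]
        refine ⟨fun y hy => ?_, ch₂⟩
        obtain ⟨hy2, hyP⟩ := hd₂ y hy
        unfold adjB
        rw [hy2]
        simpa using hyP
      · intro x hx y hy
        simp only [List.head?_cons, Option.mem_def, Option.some.injEq] at hy
        subst hy
        unfold adjB
        simp only [Bool.false_eq_true, if_false]
        cases d₁ with
        | nil =>
          simp only [List.getLast?_singleton, Option.mem_def, Option.some.injEq] at hx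
          subst hx
          exact h₁.nil_tRule
        | cons a l =>
          rw [List.getLast?_cons_cons] at hx
          exact lt₁ x hx
    · intro c hc
      simp only [List.cons_append, List.head?_cons, Option.mem_def, Option.some.injEq] at hc
      subst hc
      exact ⟨rfl, h⟩
    · intro c hc
      have hsplit : (i, true) :: d₁ ++ (i, false) :: d₂ =
          ((i, true) :: d₁) ++ ((i, false) :: d₂) := by simp
      rw [hsplit, List.getLast?_append_of_ne_nil _ (List.cons_ne_nil _ _)] at hc
      cases d₂ with
      | nil =>
        simp only [List.getLast?_singleton, Option.mem_def, Option.some.injEq] at hc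
        subst hc
        exact h₂.nil_tRule
      | cons a l =>
        rw [List.getLast?_cons_cons] at hc
        exact lt₂ c hc

/-- Decomposition of a Dyck word. -/
lemma IsDyck.decomp {d : List (Bracket k)} (h : IsDyck d) :
    ∃ (i : Fin k) (d₁ d₂ : List (Bracket k)),
      d = (i, true) :: d₁ ++ (i, false) :: d₂ ∧ (d₁ = [] ∨ IsDyck d₁) ∧
        (d₂ = [] ∨ IsDyck d₂) := by
  induction h with
  | pair i => exact ⟨i, [], [], rfl, Or.inl rfl, Or.inl rfl⟩
  | wrap i hw ih => exact ⟨i, _, [], by simp, Or.inr hw, Or.inl rfl⟩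
  | concat hu hv ihu ihv =>
    rename_i u v
    obtain ⟨i, d₁, d₂, rfl, h₁, h₂⟩ := ihu
    refine ⟨i, d₁, d₂ ++ v, by simp, h₁, ?_⟩
    rcases h₂ with rfl | h₂
    · exact Or.inr hv
    · exact Or.inr (IsDyck.concat h₂ hv)

lemma IsDyck.head_open {d : List (Bracket k)} (h : IsDyck d) :
    ∃ i : Fin k, d.head? = some (i, true) := by
  obtain ⟨i, d₁, d₂, rfl, -, -⟩ := h.decomp
  exact ⟨i, rfl⟩

lemma IsDyck.ne_nil {d : List (Bracket k)} (h : IsDyck d) : d ≠ [] := by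
  obtain ⟨i, d₁, d₂, rfl, -, -⟩ := h.decomp
  simp

/-- From a Dyck word satisfying the local conditions one can build a derivation. -/
lemma exists_gen :
    ∀ (n : ℕ) (d : List (Bracket k)), d.length ≤ n → IsDyck d →
      ∀ X : Option (Bracket k), (∀ c ∈ d.head?, PRule rs X c.1) →
        List.Chain' (adjB rs) d → (∀ c ∈ d.getLast?, TRule rs c) →
        ∃ w : List T, Gen rs X d w := by
  intro n
  induction n with
  | zero =>
    intro d hlen hd
    obtain ⟨i, d₁, d₂, rfl, -, -⟩ := hd.decomp
    simp at hlen
  | succ n ih =>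
    intro d hlen hd X hhead hch hlast
    obtain ⟨i, d₁, d₂, rfl, hd₁, hd₂⟩ := hd.decomp
    have hX : PRule rs X i := (hhead _ rfl : PRule rs X (i, true).1)
    have hsplit : (i, true) :: d₁ ++ (i, false) :: d₂ =
        ((i, true) :: d₁) ++ ((i, false) :: d₂) := by simp
    rw [hsplit, List.Chain', List.isChain_append] at hch
    obtain ⟨hch₁, hch₂, hglue⟩ := hch
    rw [List.isChain_cons] at hch₁ hch₂
    obtain ⟨hc₁, hch₁⟩ := hch₁
    obtain ⟨hc₂, hch₂⟩ := hch₂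
    -- the left subword
    have hgen₁ : ∃ w₁ : List T, Gen rs (some (i, true)) d₁ w₁ := by
      rcases eq_or_ne d₁ [] with rfl | hne₁
      · have : adjB rs (i, true) (i, false) := hglue _ rfl _ rfl
        unfold adjB at this
        simp only [Bool.false_eq_true, if_false] at this
        obtain ⟨r, hr, hri, a, hro⟩ := this
        exact ⟨[a], Gen.term ⟨r, hr, hri, hro⟩⟩
      · rcases hd₁ with rfl | hd₁
        · exact absurd rfl hne₁
        obtain ⟨j, hj⟩ := hd₁.head_open
        refine ih d₁ ?_ hd₁ _ ?_ hch₁ ?_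
        · have := hlen
          simp only [List.length_cons, List.length_append] at this ⊢
          omega
        · intro c hc
          rw [hj] at hc
          cases hc
          have := hc₁ _ hj
          unfold adjB at this
          simpa using this
        · intro c hc
          have hx : adjB rs c (i, false) := by
            refine hglue c ?_ _ rfl
            cases d₁ with
            | nil => exact absurd rfl hne₁
            | cons a l => rw [List.getLast?_cons_cons]; exact hc
          unfold adjB at hx
          simpa using hx
    -- the right subword
    have hgen₂ : ∃ w₂ : List T, Gen rs (some (i, false)) d₂ w₂ := by
      rcases eq_or_ne d₂ [] with rfl | hne₂
      · have : TRule rs (i, false) := by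
          refine hlast (i, false) ?_
          show (((i, true) :: d₁) ++ [(i, false)]).getLast? = some (i, false)
          exact List.getLast?_concat
        obtain ⟨r, hr, hri, a, hro⟩ := this
        exact ⟨[a], Gen.term ⟨r, hr, hri, hro⟩⟩
      · rcases hd₂ with rfl | hd₂
        · exact absurd rfl hne₂
        obtain ⟨j, hj⟩ := hd₂.head_open
        refine ih d₂ ?_ hd₂ _ ?_ hch₂ ?_
        · have := hlen
          simp only [List.length_cons, List.length_append] at this ⊢
          omega
        · intro c hc
          rw [hj] at hc
          cases hc
          have := hc₂ _ hj
          unfold adjB at this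
          simpa using this
        · intro c hc
          refine hlast c ?_
          rw [hsplit, List.getLast?_append_of_ne_nil _ (List.cons_ne_nil _ _)]
          cases d₂ with
          | nil => exact absurd rfl hne₂
          | cons a l => rw [List.getLast?_cons_cons]; exact hc
    obtain ⟨w₁, hw₁⟩ := hgen₁
    obtain ⟨w₂, hw₂⟩ := hgen₂
    exact ⟨w₁ ++ w₂, Gen.pair hX hw₁ hw₂⟩

end Aux

section Traces

variable {k : ℕ} {rs : Finset (ContextFreeRule T (Option (Bracket k)))}

lemma LmTrace.trans {g : ContextFreeGrammar T} {u v w : List (Symbol T g.NT)}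
    {l l' : List g.NT} (h : LmTrace g u v l) (h' : LmTrace g v w l') :
    LmTrace g u w (l ++ l') := by
  induction h' with
  | refl => simpa using h
  | tail huv hvw ih =>
    rw [← List.append_assoc]
    exact LmTrace.tail ih hvw

lemma LmTrace.single {g : ContextFreeGrammar T} {u v : List (Symbol T g.NT)} {A : g.NT}
    (h : LeftmostStep g u v A) : LmTrace g u v [A] :=
  LmTrace.tail (LmTrace.refl u) h

/-- From a `Gen` certificate to a leftmost derivation. -/
lemma Gen.lmTrace {X : Option (Bracket k)} {d : List (Bracket k)} {w : List T}
    (h : Gen rs X d w) (p : List T) (s : List (Symbol T (Option (Bracket k)))) :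
    LmTrace (bracketGrammar k rs)
      (p.map Symbol.terminal ++ Symbol.nonterminal X :: s)
      (p.map Symbol.terminal ++ w.map Symbol.terminal ++ s) (X :: d.map some) := by
  induction h generalizing p s with
  | term h =>
    rename_i X a
    obtain ⟨r, hr, hri, hro⟩ := h
    have : LeftmostStep (bracketGrammar k rs)
        (p.map Symbol.terminal ++ Symbol.nonterminal X :: s)
        (p.map Symbol.terminal ++ [a].map Symbol.terminal ++ s) X := by
      refine ⟨r, hr, hri, p, s, rfl, ?_⟩
      rw [hro]; rfl
    simpa using LmTrace.single this
  | pair h h₁ h₂ ih₁ ih₂ =>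
    rename_i X i d₁ d₂ w₁ w₂
    obtain ⟨r, hr, hri, hro⟩ := h
    have step1 : LmTrace (bracketGrammar k rs)
        (p.map Symbol.terminal ++ Symbol.nonterminal X :: s)
        (p.map Symbol.terminal ++
          Symbol.nonterminal (some (i, true)) :: Symbol.nonterminal (some (i, false)) :: s)
        [X] := by
      refine LmTrace.single ⟨r, hr, hri, p, s, rfl, ?_⟩
      rw [hro]; simp [pairOut]
    have t₁ := ih₁ p (Symbol.nonterminal (some (i, false)) :: s)
    have t₂ := ih₂ (p ++ w₁) s
    rw [List.map_append] at t₂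
    have comb := (step1.trans t₁).trans (by simpa using t₂)
    have : (X :: ((i, true) :: d₁ ++ (i, false) :: d₂).map some) =
        [X] ++ ((some (i, true) : Option (Bracket k)) :: d₁.map some) ++
          (some (i, false) :: d₂.map some) := by simp
    rw [this]
    have hw : p.map Symbol.terminal ++ (w₁ ++ w₂).map Symbol.terminal ++ s =
        p.map Symbol.terminal ++ w₁.map Symbol.terminal ++ w₂.map Symbol.terminal ++ s := by
      simp
    rw [hw]
    simpa only [List.append_assoc] using comb

lemma lmTrace_cases {g : ContextFreeGrammar T} {u v : List (Symbol T g.NT)} {l : List g.NT}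
    (h : LmTrace g u v l) :
    (l = [] ∧ u = v) ∨
      ∃ A l' u', l = A :: l' ∧ LeftmostStep g u u' A ∧ LmTrace g u' v l' := by
  induction h with
  | refl => exact Or.inl ⟨rfl, rfl⟩
  | tail huv hvw ih =>
    rename_i vmid ltr A
    rcases ih with ⟨rfl, rfl⟩ | ⟨B, l', u', rfl, hstep, htr⟩
    · exact Or.inr ⟨A, [], _, rfl, hvw, LmTrace.refl _⟩
    · exact Or.inr ⟨B, l' ++ [A], u', rfl, hstep, LmTrace.tail htr hvw⟩

lemma lmTrace_nil_eq {g : ContextFreeGrammar T} {u v : List (Symbol T g.NT)}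
    (h : LmTrace g u v []) : u = v := by
  rcases lmTrace_cases h with ⟨-, h1⟩ | ⟨A, l', u', hl, -, -⟩
  · exact h1
  · simp at hl

lemma lmTrace_cons_inv {g : ContextFreeGrammar T} {u v : List (Symbol T g.NT)}
    {A : g.NT} {l : List g.NT} (h : LmTrace g u v (A :: l)) :
    ∃ u', LeftmostStep g u u' A ∧ LmTrace g u' v l := by
  rcases lmTrace_cases h with ⟨h1, -⟩ | ⟨B, l', u', hl, hstep, htr⟩
  · simp at h1
  · obtain ⟨rfl, rfl⟩ : A = B ∧ l = l' := by
      injection hl with h1 h2; exact ⟨h1, h2⟩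
    exact ⟨u', hstep, htr⟩

lemma terminal_prefix_eq {N : Type*} :
    ∀ (p p' : List T) (X X' : N) (s s' : List (Symbol T N)),
      p.map Symbol.terminal ++ Symbol.nonterminal X :: s =
        p'.map Symbol.terminal ++ Symbol.nonterminal X' :: s' →
      p = p' ∧ X = X' ∧ s = s' := by
  intro p
  induction p with
  | nil =>
    intro p' X X' s s' h
    cases p' with
    | nil =>
      simp only [List.map_nil, List.nil_append, List.cons.injEq] at h
      obtain ⟨h1, h2⟩ := h
      injection h1 with h1
      exact ⟨rfl, h1, h2⟩
    | cons b q' =>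
      simp only [List.map_nil, List.nil_append, List.map_cons, List.cons_append,
        List.cons.injEq] at h
      exact absurd h.1 (by simp)
  | cons a q ih =>
    intro p' X X' s s' h
    cases p' with
    | nil =>
      simp only [List.map_nil, List.nil_append, List.map_cons, List.cons_append,
        List.cons.injEq] at h
      exact absurd h.1 (by simp)
    | cons b q' =>
      simp only [List.map_cons, List.cons_append, List.cons.injEq] at h
      obtain ⟨hab, h⟩ := h
      injection hab with hab
      obtain ⟨h1, h2, h3⟩ := ih q' X X' s s' h
      exact ⟨by rw [hab, h1], h2, h3⟩

lemma map_terminal_ne {N : Type*} (p : List T) (X : N) (s : List (Symbol T N)) (w : List T) :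
    p.map Symbol.terminal ++ Symbol.nonterminal X :: s ≠ w.map Symbol.terminal := by
  intro h
  have : (Symbol.nonterminal X : Symbol T N) ∈ w.map Symbol.terminal := by
    rw [← h]; simp
  obtain ⟨a, -, ha⟩ := List.mem_map.mp this
  simp at ha

lemma lmTrace_head {g : ContextFreeGrammar T} {p : List T} {X : g.NT}
    {s : List (Symbol T g.NT)} {w : List T} {l : List g.NT}
    (h : LmTrace g (p.map Symbol.terminal ++ Symbol.nonterminal X :: s)
      (w.map Symbol.terminal) l) :
    ∃ l₂, l = X :: l₂ := by
  rcases lmTrace_cases h with ⟨-, h1⟩ | ⟨B, l', u', rfl, hstep, -⟩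
  · exact absurd h1 (map_terminal_ne p X s w)
  · obtain ⟨r, hr, hri, p₂, s₂, hu, -⟩ := hstep
    obtain ⟨-, hXB, -⟩ := terminal_prefix_eq p p₂ X B s s₂ hu
    exact ⟨l', by rw [hXB]⟩

/-- Decomposition of a leftmost derivation according to the subtree of its first
rewritten nonterminal. -/
lemma trace_decomp
    (hpairs : ∀ r ∈ rs,
      (∃ i : Fin k, r.output =
        [Symbol.nonterminal (some (i, true)), Symbol.nonterminal (some (i, false))]) ∨
      (∃ a : T, r.output = [Symbol.terminal a])) {w : List T} :
    ∀ (n : ℕ) (l : List (Option (Bracket k))), l.length ≤ n →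
      ∀ (X : Option (Bracket k)) (p : List T) (s : List (Symbol T (Option (Bracket k)))),
        LmTrace (bracketGrammar k rs) (p.map Symbol.terminal ++ Symbol.nonterminal X :: s)
          (w.map Symbol.terminal) (X :: l) →
        ∃ (d : List (Bracket k)) (l' : List (Option (Bracket k))) (w₁ : List T),
          l = d.map some ++ l' ∧ Gen rs X d w₁ ∧
            LmTrace (bracketGrammar k rs) ((p ++ w₁).map Symbol.terminal ++ s)
              (w.map Symbol.terminal) l' := by
  intro n
  induction n with
  | zero =>
    intro l hlen X p s h
    have hl : l = [] := List.length_eq_zero_iff.mp (Nat.le_zero.mp hlen)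
    subst hl
    obtain ⟨u', hstep, htr⟩ := lmTrace_cons_inv h
    obtain ⟨r, hr, hri, p₂, s₂, hu, hv⟩ := hstep
    obtain ⟨rfl, -, rfl⟩ := terminal_prefix_eq p p₂ X X s s₂ hu
    rcases hpairs r hr with ⟨i, hout⟩ | ⟨a, hout⟩
    · exfalso
      rw [hv, hout] at htr
      obtain ⟨l₂, hl₂⟩ := lmTrace_head
        (show LmTrace (bracketGrammar k rs)
          (p.map Symbol.terminal ++
            Symbol.nonterminal (some (i, true)) :: Symbol.nonterminal (some (i, false)) :: s)
          (w.map Symbol.terminal) [] by simpa using htr)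
      simp at hl₂
    · refine ⟨[], [], [a], rfl, Gen.term ⟨r, hr, hri, hout⟩, ?_⟩
      rw [hv, hout] at htr
      simpa using htr
  | succ n ih =>
    intro l hlen X p s h
    obtain ⟨u', hstep, htr⟩ := lmTrace_cons_inv h
    obtain ⟨r, hr, hri, p₂, s₂, hu, hv⟩ := hstep
    obtain ⟨rfl, -, rfl⟩ := terminal_prefix_eq p p₂ X X s s₂ hu
    rcases hpairs r hr with ⟨i, hout⟩ | ⟨a, hout⟩
    · rw [hv, hout] at htr
      have htr' : LmTrace (bracketGrammar k rs)
          (p.map Symbol.terminal ++ Symbol.nonterminal (some (i, true)) ::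
            (Symbol.nonterminal (some (i, false)) :: s)) (w.map Symbol.terminal) l := by
        simpa using htr
      obtain ⟨l₂, rfl⟩ := lmTrace_head htr'
      obtain ⟨d₁, l₃, w₁, rfl, hgen₁, htr₃⟩ := ih l₂ (by simpa using hlen) (some (i, true)) p
        (Symbol.nonterminal (some (i, false)) :: s) htr'
      obtain ⟨l₄, rfl⟩ := lmTrace_head htr₃
      have hlen₄ : l₄.length ≤ n := by
        have := hlen
        simp only [List.length_cons, List.length_append] at this
        omega
      obtain ⟨d₂, l₅, w₂, rfl, hgen₂, htr₅⟩ := ih l₄ hlen₄ (some (i, false)) (p ++ w₁) s htr₃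
      refine ⟨(i, true) :: d₁ ++ (i, false) :: d₂, l₅, w₁ ++ w₂, by simp,
        Gen.pair ⟨r, hr, hri, hout⟩ hgen₁ hgen₂, ?_⟩
      simpa [List.append_assoc] using htr₅
    · refine ⟨[], l, [a], rfl, Gen.term ⟨r, hr, hri, hout⟩, ?_⟩
      rw [hv, hout] at htr
      simpa using htr

lemma LmTrace.derives {g : ContextFreeGrammar T} {u v : List (Symbol T g.NT)} {l : List g.NT}
    (h : LmTrace g u v l) : g.Derives u v := by
  induction h with
  | refl => exact ContextFreeGrammar.Derives.refl _
  | tail huv hvw ih =>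
    refine ih.trans_produces ?_
    obtain ⟨r, hr, hri, p, s, rfl, rfl⟩ := hvw
    refine ⟨r, hr, ?_⟩
    rw [ContextFreeRule.rewrites_iff]
    exact ⟨p.map Symbol.terminal, s, by rw [hri]; simp, by simp⟩

/-- The yield relation used to analyse arbitrary derivations. -/
def YieldP (rs : Finset (ContextFreeRule T (Option (Bracket k)))) :
    Symbol T (Option (Bracket k)) → List T → Prop
  | Symbol.terminal a, w => w = [a]
  | Symbol.nonterminal X, w => ∃ d, Gen rs X d w

lemma forall₂_append_split {α β : Type*} {R : α → β → Prop} :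
    ∀ {a c : List α} {l : List β}, List.Forall₂ R (a ++ c) l →
      ∃ la lc, l = la ++ lc ∧ List.Forall₂ R a la ∧ List.Forall₂ R c lc := by
  intro a
  induction a with
  | nil => exact fun h => ⟨[], _, rfl, List.Forall₂.nil, h⟩
  | cons x a ih =>
    intro c l h
    cases h with
    | cons hx h =>
      obtain ⟨la, lc, rfl, h1, h2⟩ := ih h
      exact ⟨_ :: la, lc, rfl, List.Forall₂.cons hx h1, h2⟩

lemma derives_yield
    (hpairs : ∀ r ∈ rs,
      (∃ i : Fin k, r.output =
        [Symbol.nonterminal (some (i, true)), Symbol.nonterminal (some (i, false))]) ∨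
      (∃ a : T, r.output = [Symbol.terminal a]))
    {w : List T} {u : List (Symbol T (Option (Bracket k)))}
    (h : (bracketGrammar k rs).Derives u (w.map Symbol.terminal)) :
    ∃ ws : List (List T), w = ws.flatten ∧ List.Forall₂ (YieldP rs) u ws := by
  induction h using Relation.ReflTransGen.head_induction_on with
  | refl =>
    refine ⟨w.map (fun a => [a]), ?_, ?_⟩
    · induction w with
      | nil => rfl
      | cons a w ihw => simp [← ihw]
    · induction w with
      | nil => exact List.Forall₂.nil
      | cons a w ihw => exact List.Forall₂.cons rfl ihw
  | head hstep htail ih =>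
    obtain ⟨ws, hflat, hfa⟩ := ih
    obtain ⟨r, hr, hrw⟩ := hstep
    rw [ContextFreeRule.rewrites_iff] at hrw
    obtain ⟨p, q, rfl, rfl⟩ := hrw
    have hfa' : List.Forall₂ (YieldP rs) (p ++ (r.output ++ q)) ws := by simpa using hfa
    obtain ⟨wp, w1, rfl, hp, h1⟩ := forall₂_append_split hfa'
    obtain ⟨wo, wq, rfl, ho, hq⟩ := forall₂_append_split h1
    rcases hpairs r hr with ⟨i, hout⟩ | ⟨a, hout⟩
    · rw [hout] at ho
      cases ho with
      | cons hy1 ho =>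
        cases ho with
        | cons hy2 ho =>
          cases ho
          rename_i w₁ w₂
          obtain ⟨d₁, hg₁⟩ := hy1
          obtain ⟨d₂, hg₂⟩ := hy2
          refine ⟨wp ++ [w₁ ++ w₂] ++ wq, by rw [hflat]; simp, ?_⟩
          have hy : YieldP rs (Symbol.nonterminal r.input) (w₁ ++ w₂) :=
            ⟨_, Gen.pair ⟨r, hr, rfl, hout⟩ hg₁ hg₂⟩
          have hall := List.rel_append hp
            (List.rel_append (List.Forall₂.cons hy List.Forall₂.nil) hq)
          simpa using hall
    · rw [hout] at ho
      cases ho with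
      | cons hy1 ho =>
        cases ho
        rename_i w₁
        have hw₁ : w₁ = [a] := hy1
        refine ⟨wp ++ [w₁] ++ wq, by rw [hflat]; simp, ?_⟩
        have hy : YieldP rs (Symbol.nonterminal r.input) w₁ := by
          rw [hw₁]
          exact ⟨[], Gen.term ⟨r, hr, rfl, hout⟩⟩
        have hall := List.rel_append hp
          (List.rel_append (List.Forall₂.cons hy List.Forall₂.nil) hq)
        simpa using hall

lemma gen_flatMap (hg : IsDyckNF (bracketGrammar k rs))
    (hax : ∀ r ∈ rs, r.input = none →
      (∀ a : T, r.output ≠ [Symbol.terminal a]) ∧ r.output ≠ [])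
    {φ : Bracket k → List T}
    (hφ : ∀ b : Bracket k,
      (∀ a : T, TerminalRule (bracketGrammar k rs) (some b) a → φ b = [a]) ∧
      ((¬ ∃ a : T, TerminalRule (bracketGrammar k rs) (some b) a) → φ b = [])) :
    ∀ {X : Option (Bracket k)} {d : List (Bracket k)} {w : List T},
      Gen rs X d w → (X.elim [] φ) ++ d.flatMap φ = w := by
  intro X d w h
  induction h with
  | term h =>
    rename_i X a
    obtain ⟨r, hr, hri, hro⟩ := h
    cases X with
    | none => exact absurd hro ((hax r hr hri).1 a)
    | some b =>
      have ht : TerminalRule (bracketGrammar k rs) (some b) a := ⟨r, hr, hri, hro⟩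
      simp [(hφ b).1 a ht]
  | pair h h₁ h₂ ih₁ ih₂ =>
    rename_i X i d₁ d₂ w₁ w₂
    have hX : X.elim [] φ = [] := by
      cases X with
      | none => rfl
      | some b =>
        refine (hφ b).2 ?_
        rintro ⟨a, r', hr', hri', hro'⟩
        obtain ⟨r, hr, hri, hro⟩ := h
        have heq : r = r' :=
          hg.2.1 r' hr' a hro' (by rw [hri']; simp) r hr (by rw [hri, hri'])
        rw [heq, hro'] at hro
        simp [pairOut] at hro
    have e₁ : φ (i, true) ++ d₁.flatMap φ = w₁ := by simpa using ih₁
    have e₂ : φ (i, false) ++ d₂.flatMap φ = w₂ := by simpa using ih₂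
    rw [hX, List.nil_append, ← e₁, ← e₂]
    simp

lemma Gen.good {d : List (Bracket k)} {w : List T} (hgen : Gen rs none d w) (hne : d ≠ []) :
    Good rs d := by
  obtain ⟨hch, hhd, hlt⟩ := hgen.props
  obtain ⟨c, l, rfl⟩ := List.exists_cons_of_ne_nil hne
  obtain ⟨h2, hP⟩ := hhd c rfl
  have hlast0 : (c :: l).getLast? = some ((c :: l).getLast (by simp)) :=
    List.getLast?_eq_getLast _
  exact ⟨⟨c, rfl, h2, hP⟩, hch, _, hlast0, hlt _ hlast0⟩

end Traces

section DFAsec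

variable {k : ℕ}

open Classical in
/-- The DFA recognizing the local conditions `Good`. -/
noncomputable def traceDFA (rs : Finset (ContextFreeRule T (Option (Bracket k)))) :
    DFA (Bracket k) (Option (Option (Bracket k))) where
  step q c :=
    match q with
    | none => none
    | some none => if c.2 = true ∧ PRule rs none c.1 then some (some c) else none
    | some (some b) => if adjB rs b c then some (some c) else none
  start := some none
  accept := {q | ∃ b : Bracket k, q = some (some b) ∧ TRule rs b}

variable {rs : Finset (ContextFreeRule T (Option (Bracket k)))}

lemma traceDFA_dead : ∀ l : List (Bracket k), (traceDFA rs).evalFrom none l = none := by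
  intro l
  induction l with
  | nil => rfl
  | cons c l ih => exact ih

lemma traceDFA_eval :
    ∀ (l : List (Bracket k)) (b : Bracket k),
      ((traceDFA rs).evalFrom (some (some b)) l ∈ (traceDFA rs).accept) ↔
        (List.Chain' (adjB rs) (b :: l) ∧
          ∃ c, (b :: l).getLast? = some c ∧ TRule rs c) := by
  intro l
  induction l with
  | nil =>
    intro b
    constructor
    · rintro ⟨b', hb', ht⟩
      obtain rfl : b = b' := by
        injection hb' with hb'; injection hb' with hb'
      exact ⟨List.isChain_singleton _, b, rfl, ht⟩
    · rintro ⟨-, c, hc, ht⟩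
      obtain rfl : b = c := by injection hc
      exact ⟨b, rfl, ht⟩
  | cons c l ih =>
    intro b
    by_cases h : adjB rs b c
    · have hstep : (traceDFA rs).evalFrom (some (some b)) (c :: l) =
          (traceDFA rs).evalFrom (some (some c)) l := by
        show (traceDFA rs).evalFrom ((traceDFA rs).step (some (some b)) c) l = _
        have : (traceDFA rs).step (some (some b)) c = some (some c) := if_pos h
        rw [this]
      rw [hstep, ih c, List.Chain', List.Chain', List.isChain_cons_cons, List.getLast?_cons_cons]
      tauto
    · have hstep : (traceDFA rs).evalFrom (some (some b)) (c :: l) = none := by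
        show (traceDFA rs).evalFrom ((traceDFA rs).step (some (some b)) c) l = none
        have : (traceDFA rs).step (some (some b)) c = none := if_neg h
        rw [this]
        exact traceDFA_dead l
      rw [hstep]
      constructor
      · rintro ⟨b', hb', -⟩
        exact absurd hb' (by simp)
      · rintro ⟨hch, -⟩
        exact absurd (List.isChain_cons_cons.mp hch).1 h

lemma traceDFA_accepts (d : List (Bracket k)) :
    d ∈ (traceDFA rs).accepts ↔ Good rs d := by
  cases d with
  | nil =>
    rw [DFA.mem_accepts]
    constructor
    · rintro ⟨b', hb', -⟩
      exact absurd hb' (by simp [traceDFA])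
    · rintro ⟨⟨c, hc, -⟩, -, -⟩
      simp at hc
  | cons c l =>
    rw [DFA.mem_accepts]
    show (traceDFA rs).evalFrom ((traceDFA rs).step (some none) c) l ∈ _ ↔ _
    by_cases h : c.2 = true ∧ PRule rs none c.1
    · have : (traceDFA rs).step (some none) c = some (some c) := if_pos h
      rw [this, traceDFA_eval l c]
      unfold Good
      constructor
      · rintro ⟨hch, c', hc', ht⟩
        exact ⟨⟨c, rfl, h.1, h.2⟩, hch, c', hc', ht⟩
      · rintro ⟨-, hch, c', hc', ht⟩
        exact ⟨hch, c', hc', ht⟩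
    · have : (traceDFA rs).step (some none) c = none := if_neg h
      rw [this, traceDFA_dead l]
      constructor
      · rintro ⟨b', hb', -⟩
        exact absurd hb' (by simp)
      · rintro ⟨⟨c', hc', h1, h2⟩, -, -⟩
        obtain rfl : c = c' := by injection hc'
        exact (h ⟨h1, h2⟩).elim

end DFAsec

/-- Let `G_k` be a grammar in Dyck normal form with nonterminals
`{S, [₁, …, [ₖ, ]₁, …, ]ₖ}` (two-nonterminal rules being of the form `X → [ᵢ ]ᵢ`) that has
no rule `S → t` with `t ∈ T ∪ {λ}`.  Then there is a regular language `R` over the `2k`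
brackets with `D_k ∩ R = 𝓛(G_k)` (the trace-language of `G_k`), and consequently
`L(G_k) = φ(D_k ∩ R)`, where `φ` maps each bracket rewritten to two nonterminals to `λ` and
each bracket `N` with a rule `N → t` to `t`. -/
theorem cs_regular_eq_traceLang {k : ℕ}
    (rs : Finset (ContextFreeRule T (Option (Bracket k))))
    (hg : IsDyckNF (bracketGrammar k rs))
    (hpairs : ∀ r ∈ rs,
      (∃ i : Fin k, r.output =
        [Symbol.nonterminal (some (i, true)), Symbol.nonterminal (some (i, false))]) ∨
      (∃ a : T, r.output = [Symbol.terminal a]))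
    (hax : ∀ r ∈ rs, r.input = none →
      (∀ a : T, r.output ≠ [Symbol.terminal a]) ∧ r.output ≠ []) :
    ∃ R : Language (Bracket k),
      R.IsRegular ∧
      (∀ d : List (Bracket k),
        (IsDyck d ∧ d ∈ R) ↔ ∃ w : List T, IsTraceWord (bracketGrammar k rs) w (d.map some)) ∧
      ∀ φ : Bracket k → List T,
        (∀ b : Bracket k,
          (∀ a : T, TerminalRule (bracketGrammar k rs) (some b) a → φ b = [a]) ∧
          ((¬ ∃ a : T, TerminalRule (bracketGrammar k rs) (some b) a) → φ b = [])) →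
        ∀ w : List T,
          w ∈ (bracketGrammar k rs).language ↔ ∃ d, IsDyck d ∧ d ∈ R ∧ d.flatMap φ = w := by
  classical
  have hgen_of_good : ∀ d : List (Bracket k), IsDyck d → Good rs d →
      ∃ w : List T, Gen rs none d w := by
    rintro d hdy ⟨⟨c, hc, hc2, hcP⟩, hch, c', hc', ht'⟩
    exact exists_gen (rs := rs) d.length d le_rfl hdy none
      (fun c₀ hc₀ => by rw [hc] at hc₀; cases hc₀; exact hcP)
      hch
      (fun c₀ hc₀ => by rw [hc'] at hc₀; cases hc₀; exact ht')
  have hne_of_gen : ∀ (d : List (Bracket k)) (w : List T), Gen rs none d w → d ≠ [] := by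
    rintro d w hgen rfl
    obtain ⟨a, -, r, hr, hri, hro⟩ := hgen.nil_inv
    exact (hax r hr hri).1 a hro
  refine ⟨(traceDFA rs).accepts,
    ⟨Option (Option (Bracket k)), inferInstance, traceDFA rs, rfl⟩, ?_, ?_⟩
  · intro d
    constructor
    · rintro ⟨hdy, hR⟩
      rw [traceDFA_accepts] at hR
      obtain ⟨w, hgen⟩ := hgen_of_good d hdy hR
      refine ⟨w, by simpa using hdy.ne_nil, ?_⟩
      have := hgen.lmTrace [] []
      simpa using this
    · rintro ⟨w, hne, htr⟩
      have h0 : LmTrace (bracketGrammar k rs)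
          (([] : List T).map Symbol.terminal ++
            Symbol.nonterminal (none : Option (Bracket k)) ::
              ([] : List (Symbol T (Option (Bracket k)))))
          (w.map Symbol.terminal) (none :: d.map some) := by simpa using htr
      obtain ⟨d', l', w₁, hdl, hgen, htr'⟩ :=
        trace_decomp hpairs (d.map some).length (d.map some) le_rfl none [] [] h0
      have hl' : l' = [] := by
        cases l' with
        | nil => rfl
        | cons A l'' =>
          obtain ⟨u', hstep, -⟩ := lmTrace_cons_inv htr'
          obtain ⟨r, hr, hri, p₂, s₂, hu, -⟩ := hstep
          simp only [List.nil_append, List.append_nil] at hu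
          exact absurd hu.symm (map_terminal_ne p₂ A s₂ w₁)
      subst hl'
      rw [List.append_nil] at hdl
      have hd' : d = d' := by
        have hinj : Function.Injective (some : Bracket k → Option (Bracket k)) :=
          fun a b h => Option.some.inj h
        exact List.map_injective_iff.mpr hinj hdl
      subst hd'
      have hw : w₁ = w := by
        have := lmTrace_nil_eq htr'
        simp only [List.nil_append, List.append_nil] at this
        exact List.map_injective_iff.mpr (fun a b h => by injection h) this
      subst hw
      have hne' : d ≠ [] := hne_of_gen d w₁ hgen
      refine ⟨hgen.isDyck hne', ?_⟩
      rw [traceDFA_accepts]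
      exact hgen.good hne'
  · intro φ hφ w
    rw [ContextFreeGrammar.mem_language_iff]
    constructor
    · intro hd
      obtain ⟨ws, hflat, hfa⟩ := derives_yield hpairs hd
      cases hfa with
      | cons hy hnil =>
        cases hnil
        rename_i w₀
        obtain ⟨d, hgen⟩ := hy
        have hw0 : w = w₀ := by simpa using hflat
        subst hw0
        have hne' : d ≠ [] := hne_of_gen d w hgen
        refine ⟨d, hgen.isDyck hne', ?_, ?_⟩
        · rw [traceDFA_accepts]
          exact hgen.good hne'
        · simpa using gen_flatMap hg hax hφ hgen
    · rintro ⟨d, hdy, hR, hmap⟩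
      rw [traceDFA_accepts] at hR
      obtain ⟨w', hgen⟩ := hgen_of_good d hdy hR
      have hww : d.flatMap φ = w' := by simpa using gen_flatMap hg hax hφ hgen
      rw [hmap] at hww
      subst hww
      have := (hgen.lmTrace [] []).derives
      simpa using this

end CS
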